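/- Uniqueness of very weak solutions (mild form): in the setting below, let (B_ε)_{ε∈(0,1]} and (B̃_ε)_{ε∈(0,1]} be bounded linear operators on E such that ‖B_ε‖ ≤ N_q log(1/ε) for some N_q > 0, and such that the difference is negligible: for every n ∈ ℕ there exists c > 0 with ‖B_ε − B̃_ε‖ ≤ c ε^n for all ε ∈ (0,1]. Let u_ε and ũ_ε be continuous mild solutions on [0,T] with potentials B_ε and B̃_ε respectively (with the same (T_s), f and g), and assume the net (ũ_ε) is moderate: there exist C₁ > 0 and N ∈ ℕ with sup_{t∈[0,T]} ‖ũ_ε(t)‖ ≤ C₁ ε^{-N} for all ε. Then for every k ∈ ℕ there exists C > 0 such that sup_{t ∈ [0,T]} ‖u_ε(t) − ũ_ε(t)‖_E ≤ C ε^k for all ε ∈ (0,1]. -/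

import Mathlib

open Set MeasureTheory

/-- uniqueness of very weak solutions (mild form): if two nets of
potentials `B_ε`, `B̃_ε` are of log-type and their difference is negligible,
`u_ε`, `ũ_ε` are corresponding continuous mild solutions (same `T_s`, `f`, `g`) and
`(ũ_ε)` is moderate, then the difference `u_ε − ũ_ε` is negligible:
for every `k ∈ ℕ` there is `C > 0` with `sup_{t∈[0,T]} ‖u_ε(t) − ũ_ε(t)‖ ≤ C ε^k`. -/

lemma gronwall_int {φ : ℝ → ℝ} {a L T : ℝ} (hT : 0 ≤ T) (ha : 0 ≤ a) (hL : 0 < L)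
    (hφ : ContinuousOn φ (Icc 0 T)) (hφ0 : ∀ t ∈ Icc 0 T, 0 ≤ φ t)
    (h : ∀ t ∈ Icc 0 T, φ t ≤ a + L * ∫ s in (0:ℝ)..t, φ s) :
    ∀ t ∈ Icc 0 T, φ t ≤ a * Real.exp (L * t) := by
  set ψ : ℝ → ℝ := fun u => φ (max 0 (min u T)) with hψdef
  have hproj : ∀ u : ℝ, max 0 (min u T) ∈ Icc (0:ℝ) T := fun u =>
    ⟨le_max_left _ _, max_le hT (min_le_right _ _)⟩
  have hψcont : Continuous ψ :=
    hφ.comp_continuous (continuous_const.max (continuous_id.min continuous_const)) hproj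
  have hψeq : ∀ u ∈ Icc (0:ℝ) T, ψ u = φ u := by
    intro u hu
    simp [hψdef, min_eq_left hu.2, max_eq_right hu.1]
  have hψ0 : ∀ u, 0 ≤ ψ u := fun u => hφ0 _ (hproj u)
  set F : ℝ → ℝ := fun u => ∫ s in (0:ℝ)..u, ψ s with hFdef
  have hFderiv : ∀ x : ℝ, HasDerivAt F (ψ x) x := fun x =>
    (hψcont.integral_hasStrictDerivAt 0 x).hasDerivAt
  have hFeq : ∀ u ∈ Icc (0:ℝ) T, F u = ∫ s in (0:ℝ)..u, φ s := by
    intro u hu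
    refine intervalIntegral.integral_congr fun s hs => hψeq s ?_
    rw [uIcc_of_le hu.1] at hs
    exact ⟨hs.1, hs.2.trans hu.2⟩
  have hF0 : ∀ u ∈ Icc (0:ℝ) T, 0 ≤ F u := fun u hu =>
    intervalIntegral.integral_nonneg hu.1 fun s _ => hψ0 s
  have hgb : ∀ x ∈ Icc (0:ℝ) T, ‖F x‖ ≤ gronwallBound 0 L a (x - 0) := by
    refine norm_le_gronwallBound_of_norm_deriv_right_le
      (fun x _ => (hFderiv x).continuousAt.continuousWithinAt)
      (fun x _ => (hFderiv x).hasDerivWithinAt) ?_ ?_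
    · simp [hFdef]
    · intro x hx
      have hx' : x ∈ Icc (0:ℝ) T := Ico_subset_Icc_self hx
      rw [Real.norm_of_nonneg (hψ0 x), Real.norm_of_nonneg (hF0 x hx'), hψeq x hx',
        hFeq x hx']
      have := h x hx'
      linarith
  intro t ht
  have h1 := h t ht
  have h2 := hgb t ht
  rw [Real.norm_of_nonneg (hF0 t ht), hFeq t ht] at h2
  have hgbval : gronwallBound 0 L a (t - 0) = a / L * (Real.exp (L * t) - 1) := by
    rw [gronwallBound_of_K_ne_0 hL.ne']
    ring_nf
  rw [hgbval] at h2
  have hLa : L * (a / L * (Real.exp (L * t) - 1)) = a * (Real.exp (L * t) - 1) := by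
    field_simp
  have hmul : L * (∫ s in (0:ℝ)..t, φ s) ≤ a * (Real.exp (L * t) - 1) := by
    calc L * (∫ s in (0:ℝ)..t, φ s) ≤ L * (a / L * (Real.exp (L * t) - 1)) :=
          mul_le_mul_of_nonneg_left h2 hL.le
      _ = a * (Real.exp (L * t) - 1) := hLa
  nlinarith [hmul]

lemma cont_Tt_apply {E : Type*} [NormedAddCommGroup E] [NormedSpace ℝ E]
    {T K0 : ℝ} (Tt : ℝ → E →L[ℝ] E)
    (hTcont : ∀ x : E, ContinuousOn (fun s => Tt s x) (Icc 0 T))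
    (hK : ∀ s ∈ Icc (0:ℝ) T, ‖Tt s‖ ≤ K0)
    {t : ℝ} (ht : t ∈ Icc (0:ℝ) T) {c : ℝ → E} (hc : ContinuousOn c (Icc 0 t)) :
    ContinuousOn (fun s => Tt (t - s) (c s)) (Icc 0 t) := by
  intro s₀ hs₀
  have hmap : MapsTo (fun s => t - s) (Icc 0 t) (Icc 0 T) := by
    intro s hs
    simp only [mem_Icc] at hs ⊢
    constructor <;> [linarith [hs.2]; linarith [hs.1, ht.2]]
  have h2 : ContinuousWithinAt (fun s => Tt (t - s) (c s₀)) (Icc 0 t) s₀ :=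
    (hTcont (c s₀) _ (hmap hs₀)).comp
      ((continuous_const.sub continuous_id).continuousWithinAt) hmap
  have h1 : Filter.Tendsto (fun s => Tt (t - s) (c s - c s₀))
      (nhdsWithin s₀ (Icc 0 t)) (nhds 0) := by
    apply squeeze_zero_norm'
    · filter_upwards [self_mem_nhdsWithin] with s hs
      calc ‖Tt (t - s) (c s - c s₀)‖ ≤ ‖Tt (t - s)‖ * ‖c s - c s₀‖ :=
            ContinuousLinearMap.le_opNorm _ _
        _ ≤ K0 * ‖c s - c s₀‖ :=
            mul_le_mul_of_nonneg_right (hK _ (hmap hs)) (norm_nonneg _)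
    · have hct : Filter.Tendsto (fun s => c s - c s₀) (nhdsWithin s₀ (Icc 0 t)) (nhds 0) := by
        simpa using (hc s₀ hs₀).sub_const (c s₀)
      simpa using (hct.norm.const_mul K0)
  have heq : (fun s => Tt (t - s) (c s)) =
      fun s => Tt (t - s) (c s - c s₀) + Tt (t - s) (c s₀) := by
    funext s
    rw [← map_add, sub_add_cancel]
  rw [ContinuousWithinAt, heq]
  simpa using h1.add h2

theorem very_weak_solution_unique
    {E : Type*} [NormedAddCommGroup E] [NormedSpace ℝ E] [CompleteSpace E]
    (T : ℝ) (hT : 0 < T) (M w : ℝ) (hM : 0 < M) (hw : 0 ≤ w)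
    (Tt : ℝ → E →L[ℝ] E)
    (hTcont : ∀ x : E, ContinuousOn (fun s => Tt s x) (Icc 0 T))
    (hTbound : ∀ s ∈ Icc (0 : ℝ) T, ‖Tt s‖ ≤ M * Real.exp (w * s))
    (g : E) (f : ℝ → E) (hf : ContinuousOn f (Icc 0 T))
    (Bε B'ε : ℝ → E →L[ℝ] E) (Nq : ℝ) (hNq : 0 < Nq)
    (hBlog : ∀ ε ∈ Ioc (0 : ℝ) 1, ‖Bε ε‖ ≤ Nq * Real.log (1 / ε))
    (hBneg : ∀ n : ℕ, ∃ c > (0 : ℝ), ∀ ε ∈ Ioc (0 : ℝ) 1,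
      ‖Bε ε - B'ε ε‖ ≤ c * ε ^ n)
    (uε u'ε : ℝ → ℝ → E)
    (huc : ∀ ε ∈ Ioc (0 : ℝ) 1, ContinuousOn (uε ε) (Icc 0 T))
    (humild : ∀ ε ∈ Ioc (0 : ℝ) 1, ∀ t ∈ Icc (0 : ℝ) T,
      uε ε t = Tt t g + ∫ s in (0 : ℝ)..t, Tt (t - s) (f s - Bε ε (uε ε s)))
    (hu'c : ∀ ε ∈ Ioc (0 : ℝ) 1, ContinuousOn (u'ε ε) (Icc 0 T))
    (hu'mild : ∀ ε ∈ Ioc (0 : ℝ) 1, ∀ t ∈ Icc (0 : ℝ) T,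
      u'ε ε t = Tt t g + ∫ s in (0 : ℝ)..t, Tt (t - s) (f s - B'ε ε (u'ε ε s)))
    (C₁ : ℝ) (hC₁ : 0 < C₁) (N : ℕ)
    (hu'mod : ∀ ε ∈ Ioc (0 : ℝ) 1, ∀ t ∈ Icc (0 : ℝ) T,
      ‖u'ε ε t‖ ≤ C₁ * (ε ^ N)⁻¹) :
    ∀ k : ℕ, ∃ C > (0 : ℝ), ∀ ε ∈ Ioc (0 : ℝ) 1, ∀ t ∈ Icc (0 : ℝ) T,
      ‖uε ε t - u'ε ε t‖ ≤ C * ε ^ k := by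
  intro k
  set K0 : ℝ := M * Real.exp (w * T) with hK0def
  have hK0pos : 0 < K0 := mul_pos hM (Real.exp_pos _)
  have hK : ∀ s ∈ Icc (0:ℝ) T, ‖Tt s‖ ≤ K0 := by
    intro s hs
    refine (hTbound s hs).trans ?_
    exact mul_le_mul_of_nonneg_left
      (Real.exp_le_exp.2 (mul_le_mul_of_nonneg_left hs.2 hw)) hM.le
  obtain ⟨m, hm⟩ := exists_nat_ge (K0 * Nq * T)
  obtain ⟨c, hc, hcB⟩ := hBneg (k + N + m)
  refine ⟨K0 * c * C₁ * T * Real.exp T, by positivity, ?_⟩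
  intro ε hε t ht
  have hε0 : 0 < ε := hε.1
  have hε1 : ε ≤ 1 := hε.2
  set v : ℝ → E := fun s => uε ε s - u'ε ε s with hvdef
  have hvcont : ContinuousOn v (Icc 0 T) := (huc ε hε).sub (hu'c ε hε)
  set A : ℝ := K0 * (c * ε ^ (k + N + m) * (C₁ * (ε ^ N)⁻¹)) with hAdef
  set L : ℝ := K0 * ‖Bε ε‖ + 1 with hLdef
  have hA0 : 0 ≤ A := by positivity
  have hL0 : 0 < L := by positivity
  -- the integral inequality
  have key : ∀ τ ∈ Icc (0:ℝ) T, ‖v τ‖ ≤ A * T + L * ∫ s in (0:ℝ)..τ, ‖v s‖ := by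
    intro τ hτ
    have hτsub : Icc (0:ℝ) τ ⊆ Icc 0 T := Icc_subset_Icc le_rfl hτ.2
    have hG1c : ContinuousOn (fun s => Tt (τ - s) (f s - Bε ε (uε ε s))) (Icc 0 τ) := by
      refine cont_Tt_apply Tt hTcont hK hτ ?_
      exact (hf.mono hτsub).sub ((Bε ε).continuous.comp_continuousOn ((huc ε hε).mono hτsub))
    have hG2c : ContinuousOn (fun s => Tt (τ - s) (f s - B'ε ε (u'ε ε s))) (Icc 0 τ) := by
      refine cont_Tt_apply Tt hTcont hK hτ ?_
      exact (hf.mono hτsub).sub ((B'ε ε).continuous.comp_continuousOn ((hu'c ε hε).mono hτsub))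
    have hG1i : IntervalIntegrable (fun s => Tt (τ - s) (f s - Bε ε (uε ε s)))
        volume 0 τ := hG1c.intervalIntegrable_of_Icc hτ.1
    have hG2i : IntervalIntegrable (fun s => Tt (τ - s) (f s - B'ε ε (u'ε ε s)))
        volume 0 τ := hG2c.intervalIntegrable_of_Icc hτ.1
    have hvrep : v τ = ∫ s in (0:ℝ)..τ,
        (Tt (τ - s) (f s - Bε ε (uε ε s)) - Tt (τ - s) (f s - B'ε ε (u'ε ε s))) := by
      rw [hvdef]
      simp only
      rw [humild ε hε τ hτ, hu'mild ε hε τ hτ,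
        intervalIntegral.integral_sub hG1i hG2i]
      abel
    have hnormv : ContinuousOn (fun s => ‖v s‖) (Icc 0 τ) := (hvcont.mono hτsub).norm
    have hRHSi : IntervalIntegrable (fun s => A + L * ‖v s‖) volume 0 τ :=
      ((continuousOn_const.add (continuousOn_const.mul hnormv))).intervalIntegrable_of_Icc hτ.1
    have hptwise : ∀ s ∈ Icc (0:ℝ) τ,
        ‖Tt (τ - s) (f s - Bε ε (uε ε s)) - Tt (τ - s) (f s - B'ε ε (u'ε ε s))‖
          ≤ A + L * ‖v s‖ := by
      intro s hs
      have hsT : s ∈ Icc (0:ℝ) T := hτsub hs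
      have hτs : τ - s ∈ Icc (0:ℝ) T := by
        constructor
        · linarith [hs.2]
        · linarith [hs.1, hτ.2]
      have heq : Tt (τ - s) (f s - Bε ε (uε ε s)) - Tt (τ - s) (f s - B'ε ε (u'ε ε s))
          = Tt (τ - s) ((B'ε ε - Bε ε) (u'ε ε s) - Bε ε (v s)) := by
        rw [← map_sub]
        congr 1
        simp only [hvdef, ContinuousLinearMap.sub_apply, map_sub]
        abel
      rw [heq]
      calc ‖Tt (τ - s) ((B'ε ε - Bε ε) (u'ε ε s) - Bε ε (v s))‖
          ≤ K0 * ‖(B'ε ε - Bε ε) (u'ε ε s) - Bε ε (v s)‖ :=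
            le_trans (ContinuousLinearMap.le_opNorm _ _)
              (mul_le_mul_of_nonneg_right (hK _ hτs) (norm_nonneg _))
        _ ≤ K0 * (‖(B'ε ε - Bε ε) (u'ε ε s)‖ + ‖Bε ε (v s)‖) := by
            exact mul_le_mul_of_nonneg_left (norm_sub_le _ _) hK0pos.le
        _ ≤ K0 * (‖B'ε ε - Bε ε‖ * ‖u'ε ε s‖ + ‖Bε ε‖ * ‖v s‖) := by
            refine mul_le_mul_of_nonneg_left
              (add_le_add (ContinuousLinearMap.le_opNorm _ _)
                (ContinuousLinearMap.le_opNorm _ _)) hK0pos.le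
        _ ≤ K0 * (c * ε ^ (k + N + m) * (C₁ * (ε ^ N)⁻¹) + ‖Bε ε‖ * ‖v s‖) := by
            refine mul_le_mul_of_nonneg_left (add_le_add ?_ le_rfl) hK0pos.le
            have h1 : ‖B'ε ε - Bε ε‖ ≤ c * ε ^ (k + N + m) := by
              rw [norm_sub_rev]; exact hcB ε hε
            exact mul_le_mul h1 (hu'mod ε hε s hsT) (norm_nonneg _) (by positivity)
        _ ≤ A + L * ‖v s‖ := by
            rw [hAdef, hLdef]
            have hB0 : 0 ≤ ‖Bε ε‖ := norm_nonneg _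
            have hv0 : 0 ≤ ‖v s‖ := norm_nonneg _
            nlinarith [hK0pos]
    calc ‖v τ‖ = ‖∫ s in (0:ℝ)..τ,
          (Tt (τ - s) (f s - Bε ε (uε ε s)) - Tt (τ - s) (f s - B'ε ε (u'ε ε s)))‖ := by
          rw [hvrep]
      _ ≤ ∫ s in (0:ℝ)..τ,
          ‖Tt (τ - s) (f s - Bε ε (uε ε s)) - Tt (τ - s) (f s - B'ε ε (u'ε ε s))‖ :=
          intervalIntegral.norm_integral_le_integral_norm hτ.1
      _ ≤ ∫ s in (0:ℝ)..τ, (A + L * ‖v s‖) :=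
          intervalIntegral.integral_mono_on hτ.1
            ((hG1c.sub hG2c).norm.intervalIntegrable_of_Icc hτ.1) hRHSi hptwise
      _ = A * τ + L * ∫ s in (0:ℝ)..τ, ‖v s‖ := by
          rw [intervalIntegral.integral_add
            (intervalIntegrable_const)
            ((continuousOn_const.mul hnormv).intervalIntegrable_of_Icc hτ.1)
            (f := fun _ => A) (g := fun s => L * ‖v s‖),
            intervalIntegral.integral_const, intervalIntegral.integral_const_mul]
          simp [smul_eq_mul, mul_comm]
      _ ≤ A * T + L * ∫ s in (0:ℝ)..τ, ‖v s‖ := by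
          have : A * τ ≤ A * T := mul_le_mul_of_nonneg_left hτ.2 hA0
          linarith
  -- Grönwall
  have hgron := gronwall_int hT.le (by positivity : (0:ℝ) ≤ A * T) hL0
    hvcont.norm (fun s _ => norm_nonneg _) key t ht
  -- bound the exponential
  have hexp : Real.exp (L * t) ≤ Real.exp T * (ε ^ m)⁻¹ := by
    have h1 : L * t ≤ L * T := mul_le_mul_of_nonneg_left ht.2 hL0.le
    have hlog0 : 0 ≤ Real.log (1 / ε) :=
      Real.log_nonneg (one_le_one_div hε0 hε1)
    have h2 : L * T ≤ K0 * Nq * T * Real.log (1 / ε) + T := by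
      rw [hLdef]
      have h := mul_le_mul_of_nonneg_left (hBlog ε hε)
        (by positivity : (0:ℝ) ≤ K0 * T)
      nlinarith [h]
    have h3 : Real.exp (K0 * Nq * T * Real.log (1 / ε)) ≤ (ε ^ m)⁻¹ := by
      have h4 : Real.exp (K0 * Nq * T * Real.log (1 / ε)) = (1 / ε) ^ (K0 * Nq * T) := by
        rw [Real.rpow_def_of_pos (by positivity), mul_comm]
      rw [h4]
      have h5 : (1 / ε) ^ (K0 * Nq * T) ≤ (1 / ε) ^ (m : ℝ) :=
        Real.rpow_le_rpow_of_exponent_le (one_le_one_div hε0 hε1) hm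
      calc (1 / ε) ^ (K0 * Nq * T) ≤ (1 / ε) ^ (m : ℝ) := h5
        _ = (ε ^ m)⁻¹ := by
          rw [Real.rpow_natCast, one_div, inv_pow]
    calc Real.exp (L * t) ≤ Real.exp (K0 * Nq * T * Real.log (1 / ε) + T) :=
          Real.exp_le_exp.2 (h1.trans h2)
      _ = Real.exp (K0 * Nq * T * Real.log (1 / ε)) * Real.exp T := Real.exp_add _ _
      _ ≤ (ε ^ m)⁻¹ * Real.exp T := by
          exact mul_le_mul_of_nonneg_right h3 (Real.exp_pos _).le
      _ = Real.exp T * (ε ^ m)⁻¹ := by ring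
  have hfinal : A * T * Real.exp (L * t) ≤ K0 * c * C₁ * T * Real.exp T * ε ^ k := by
    have h1 : A * T * Real.exp (L * t) ≤ A * T * (Real.exp T * (ε ^ m)⁻¹) :=
      mul_le_mul_of_nonneg_left hexp (by positivity)
    refine h1.trans_eq ?_
    rw [hAdef]
    have hpow : ε ^ (k + N + m) = ε ^ k * ε ^ N * ε ^ m := by rw [pow_add, pow_add]
    field_simp
    ring
  exact hgron.trans hfinal
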